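/- Let A : X → Y be a compact linear operator between Hilbert spaces with ‖A‖ = 1, let X_N ⊂ X be a closed subspace, and suppose x† = A*z with z in the range of A restricted to X_N, ‖z‖ ≤ ρ, and that ‖(αI + A*A)⁻¹A*‖ restricted to range(A|_{X_N}) is bounded by CN for all 0 < α ≤ 1. Then for 0 < α ≤ 1 and ‖y^δ − Ax†‖ ≤ δ, the Tikhonov reconstruction satisfies ‖T_α y^δ − x†‖ ≤ δ/(2√α) + min{√α·ρ/2, αCNρ}. -/

import Mathlib

open ContinuousLinearMap
open LinearMap (ker range)

/-- Surjectivity of `αI + A*A` for `α > 0`. -/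
lemma tik_exists_sol {X Y : Type*} [NormedAddCommGroup X] [InnerProductSpace ℝ X]
    [CompleteSpace X] [NormedAddCommGroup Y] [InnerProductSpace ℝ Y] [CompleteSpace Y]
    (A : X →L[ℝ] Y) (α : ℝ) (hα : 0 < α) (b : X) :
    ∃ v : X, α • v + ContinuousLinearMap.adjoint A (A v) = b := by
  set T : X →L[ℝ] X := α • ContinuousLinearMap.id ℝ X + (ContinuousLinearMap.adjoint A).comp A
    with hT
  have hTapp : ∀ v, T v = α • v + ContinuousLinearMap.adjoint A (A v) := fun v => rfl
  have hcoer : ∀ v : X, α * ‖v‖ ^ 2 ≤ inner ℝ (T v) v := by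
    intro v
    have h : (inner ℝ (T v) v : ℝ) = α * ‖v‖ ^ 2 + ‖A v‖ ^ 2 := by
      rw [hTapp, inner_add_left, real_inner_smul_left, real_inner_self_eq_norm_sq,
        ContinuousLinearMap.adjoint_inner_left, real_inner_self_eq_norm_sq]
    nlinarith [sq_nonneg ‖A v‖]
  have hlow : ∀ v : X, ‖v‖ ≤ α⁻¹ * ‖T v‖ := by
    intro v
    rcases eq_or_lt_of_le (norm_nonneg v) with h0 | h0
    · rw [← h0]; positivity
    · have h1 : α * ‖v‖ * ‖v‖ ≤ ‖T v‖ * ‖v‖ := by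
        calc α * ‖v‖ * ‖v‖ = α * ‖v‖ ^ 2 := by ring
          _ ≤ inner ℝ (T v) v := hcoer v
          _ ≤ ‖T v‖ * ‖v‖ := real_inner_le_norm _ _
      have h2 : α * ‖v‖ ≤ ‖T v‖ := le_of_mul_le_mul_right h1 h0
      rw [← mul_le_mul_iff_right₀ hα]
      calc α * ‖v‖ ≤ ‖T v‖ := h2
        _ = α * (α⁻¹ * ‖T v‖) := by field_simp
  have anti : AntilipschitzWith ⟨α⁻¹, (inv_pos.mpr hα).le⟩ T :=
    ContinuousLinearMap.antilipschitz_of_bound T hlow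
  have hclosed : IsClosed ((range (T : X →ₗ[ℝ] X)) : Set X) := by rw [LinearMap.coe_range]; exact anti.isClosed_range T.uniformContinuous
  have hrange : range (T : X →ₗ[ℝ] X) = ⊤ := by
    haveI := hclosed.completeSpace_coe
    rw [← (range (T : X →ₗ[ℝ] X)).orthogonal_orthogonal, Submodule.eq_top_iff']
    intro v
    rw [Submodule.mem_orthogonal]
    intro w hw
    have hw0 : w = 0 := by
      have h0 : (inner ℝ (T w) w : ℝ) = 0 := hw (T w) ⟨w, rfl⟩
      have := hcoer w
      rw [h0] at this
      have hn : ‖w‖ = 0 := by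
        by_contra hne
        have hp : 0 < ‖w‖ := lt_of_le_of_ne (norm_nonneg w) (Ne.symm hne)
        nlinarith [mul_pos hα (mul_pos hp hp)]
      simpa using hn
    simp [hw0]
  obtain ⟨v, hv⟩ := LinearMap.range_eq_top.mp hrange b
  exact ⟨v, by rw [← hTapp]; exact hv⟩

/-- Standard bound `‖(αI + A*A)⁻¹ A* w‖ ≤ ‖w‖ / (2√α)`. -/
lemma tik_key {X Y : Type*} [NormedAddCommGroup X] [InnerProductSpace ℝ X]
    [CompleteSpace X] [NormedAddCommGroup Y] [InnerProductSpace ℝ Y] [CompleteSpace Y]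
    (A : X →L[ℝ] Y) (α : ℝ) (hα : 0 < α) (v : X) (w : Y)
    (h : α • v + ContinuousLinearMap.adjoint A (A v) = ContinuousLinearMap.adjoint A w) :
    ‖v‖ ≤ ‖w‖ / (2 * Real.sqrt α) := by
  have h1 : α * ‖v‖ ^ 2 + ‖A v‖ ^ 2 = inner ℝ (A v) w := by
    have h0 := congrArg (fun u => (inner ℝ v u : ℝ)) h
    simpa [inner_add_right, real_inner_smul_right, real_inner_self_eq_norm_sq,
      ContinuousLinearMap.adjoint_inner_right] using h0
  have h2 : (inner ℝ (A v) w : ℝ) ≤ ‖A v‖ * ‖w‖ := real_inner_le_norm _ _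
  have h3 : α * ‖v‖ ^ 2 ≤ ‖w‖ ^ 2 / 4 := by nlinarith [sq_nonneg (‖A v‖ - ‖w‖ / 2)]
  have hs : 0 < Real.sqrt α := Real.sqrt_pos.mpr hα
  have hsq : Real.sqrt α * Real.sqrt α = α := Real.mul_self_sqrt hα.le
  have h4 : ‖v‖ ^ 2 ≤ (‖w‖ / (2 * Real.sqrt α)) ^ 2 := by
    rw [div_pow, mul_pow, Real.sq_sqrt hα.le, le_div_iff₀ (by positivity : (0:ℝ) < 2 ^ 2 * α)]
    nlinarith
  calc ‖v‖ = Real.sqrt (‖v‖ ^ 2) := (Real.sqrt_sq (norm_nonneg v)).symm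
    _ ≤ Real.sqrt ((‖w‖ / (2 * Real.sqrt α)) ^ 2) := Real.sqrt_le_sqrt h4
    _ = ‖w‖ / (2 * Real.sqrt α) := Real.sqrt_sq (by positivity)


/-- Refined Tikhonov error bound when the true solution lies in a closed subspace
`X_N` of dimension `N`: if `x† = A*z` with `z ∈ range(A|_{X_N})`, `‖z‖ ≤ ρ`, and
`‖(αI + A*A)⁻¹A*‖ ≤ CN` on `range(A|_{X_N})` for all `0 < α ≤ 1`, then
`‖T_α y^δ − x†‖ ≤ δ/(2√α) + min{√α ρ/2, α C N ρ}`. -/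
theorem tikhonov_error_subspace
    {X Y : Type*} [NormedAddCommGroup X] [InnerProductSpace ℝ X] [CompleteSpace X]
    [NormedAddCommGroup Y] [InnerProductSpace ℝ Y] [CompleteSpace Y]
    (A : X →L[ℝ] Y) (hA : IsCompactOperator A) (hAnorm : ‖A‖ = 1)
    (XN : Submodule ℝ X) (hXN : IsClosed (XN : Set X))
    (N : ℕ) (C ρ : ℝ) (hC : 0 < C)
    (z : Y) (hz : ‖z‖ ≤ ρ) (hzrange : ∃ x ∈ XN, A x = z)
    (xdag : X) (hxdag : xdag = ContinuousLinearMap.adjoint A z)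
    (hbound : ∀ α' : ℝ, 0 < α' → α' ≤ 1 → ∀ w : Y, (∃ x ∈ XN, A x = w) →
      ∀ v : X, α' • v + ContinuousLinearMap.adjoint A (A v)
                = ContinuousLinearMap.adjoint A w →
        ‖v‖ ≤ C * N * ‖w‖)
    (δ : ℝ) (yδ : Y) (hnoise : ‖yδ - A xdag‖ ≤ δ)
    (α : ℝ) (hα : 0 < α) (hα1 : α ≤ 1)
    (xα : X)
    (hxα : ContinuousLinearMap.adjoint A (A xα) + α • xα
            = ContinuousLinearMap.adjoint A yδ) :
    ‖xα - xdag‖ ≤ δ / (2 * Real.sqrt α)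
      + min (Real.sqrt α * ρ / 2) (α * C * N * ρ) := by
  have hs : 0 < Real.sqrt α := Real.sqrt_pos.mpr hα
  have hsq : Real.sqrt α * Real.sqrt α = α := Real.mul_self_sqrt hα.le
  obtain ⟨xb, hxb⟩ := tik_exists_sol A α hα (ContinuousLinearMap.adjoint A (A xdag))
  -- noise part
  have e1 : ContinuousLinearMap.adjoint A (A xα)
      = ContinuousLinearMap.adjoint A yδ - α • xα := by rw [← hxα]; abel
  have e2 : ContinuousLinearMap.adjoint A (A xb)
      = ContinuousLinearMap.adjoint A (A xdag) - α • xb := by rw [← hxb]; abel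
  have hn1 : α • (xα - xb) + ContinuousLinearMap.adjoint A (A (xα - xb))
      = ContinuousLinearMap.adjoint A (yδ - A xdag) := by
    rw [map_sub A, map_sub (ContinuousLinearMap.adjoint A), e1, e2, smul_sub,
      map_sub (ContinuousLinearMap.adjoint A) yδ (A xdag)]
    abel
  have hnoise1 : ‖xα - xb‖ ≤ δ / (2 * Real.sqrt α) := by
    refine le_trans (tik_key A α hα _ _ hn1) ?_
    gcongr
  -- approximation part
  set v : X := α⁻¹ • (xdag - xb) with hvdef
  have hv : α • v + ContinuousLinearMap.adjoint A (A v)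
      = ContinuousLinearMap.adjoint A z := by
    have hd : ContinuousLinearMap.adjoint A (A (xdag - xb)) = α • xb := by
      rw [map_sub A, map_sub (ContinuousLinearMap.adjoint A), e2]; abel
    rw [hvdef, map_smul A, map_smul (ContinuousLinearMap.adjoint A), hd,
      smul_smul, smul_smul, inv_mul_cancel₀ hα.ne', one_smul, ← hxdag]
    simp [smul_smul, mul_inv_cancel₀ hα.ne']
  have hxbd : xb - xdag = -(α • v) := by
    rw [hvdef, smul_smul, mul_inv_cancel₀ hα.ne', one_smul]; abel
  have hxbnorm : ‖xb - xdag‖ = α * ‖v‖ := by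
    rw [hxbd, norm_neg, norm_smul, Real.norm_eq_abs, abs_of_pos hα]
  have hva : ‖v‖ ≤ C * N * ‖z‖ := hbound α hα hα1 z hzrange v hv
  have hvb : ‖v‖ ≤ ‖z‖ / (2 * Real.sqrt α) := tik_key A α hα v z hv
  have happrox : ‖xb - xdag‖ ≤ min (Real.sqrt α * ρ / 2) (α * C * N * ρ) := by
    rw [hxbnorm]
    refine le_min ?_ ?_
    · have : α * ‖v‖ ≤ α * (‖z‖ / (2 * Real.sqrt α)) := by
        exact mul_le_mul_of_nonneg_left hvb hα.le
      refine le_trans this ?_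
      have heq : α * (‖z‖ / (2 * Real.sqrt α)) = Real.sqrt α * ‖z‖ / 2 := by
        field_simp; linear_combination (-‖z‖) * hsq
      rw [heq]
      gcongr
    · have : α * ‖v‖ ≤ α * (C * N * ‖z‖) := mul_le_mul_of_nonneg_left hva hα.le
      refine le_trans this ?_
      have h2 := mul_le_mul_of_nonneg_left hz
        (by positivity : (0:ℝ) ≤ α * C * ↑N)
      calc α * (C * ↑N * ‖z‖) = α * C * ↑N * ‖z‖ := by ring
        _ ≤ α * C * ↑N * ρ := h2
  calc ‖xα - xdag‖ = ‖(xα - xb) + (xb - xdag)‖ := by rw [sub_add_sub_cancel]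
    _ ≤ ‖xα - xb‖ + ‖xb - xdag‖ := norm_add_le _ _
    _ ≤ δ / (2 * Real.sqrt α) + min (Real.sqrt α * ρ / 2) (α * C * N * ρ) :=
        add_le_add hnoise1 happrox
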